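/- Let T be an n×n matrix with ‖T‖ < 1 and α ∈ D. Then the Möbius transform m_α(T) = (T − αI)(I − conj(α)T)^{−1} satisfies ‖m_α(T)‖ < 1. -/

import Mathlib

set_option maxHeartbeats 1000000

open scoped ComplexConjugate

/-- The operator norm of a matrix acting on Euclidean space `ℂ^n`. -/
noncomputable def opNorm {n : ℕ} (T : Matrix (Fin n) (Fin n) ℂ) : ℝ :=
  ‖(Matrix.toEuclideanCLM (𝕜 := ℂ) T :
      EuclideanSpace ℂ (Fin n) →L[ℂ] EuclideanSpace ℂ (Fin n))‖

private lemma key_identity {n : ℕ}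
    (a : EuclideanSpace ℂ (Fin n) →L[ℂ] EuclideanSpace ℂ (Fin n))
    (α : ℂ) (y : EuclideanSpace ℂ (Fin n)) :
    ‖a y - α • y‖ ^ 2 + (1 - ‖α‖ ^ 2) * (‖y‖ ^ 2 - ‖a y‖ ^ 2)
      = ‖y - conj α • a y‖ ^ 2 := by
  have h1 := @norm_sub_sq ℂ _ _ _ _ (a y) (α • y)
  have h2 := @norm_sub_sq ℂ _ _ _ _ y (conj α • a y)
  rw [inner_smul_right] at h1 h2
  have hre : RCLike.re (α * (inner ℂ (a y) y : ℂ)) = RCLike.re (conj α * (inner ℂ y (a y) : ℂ)) := by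
    have : conj α * (inner ℂ y (a y) : ℂ) = conj (α * inner ℂ (a y) y) := by
      rw [map_mul, inner_conj_symm]
    rw [this, RCLike.conj_re]
  simp only [norm_smul, RCLike.norm_conj] at h1 h2
  nlinarith [norm_nonneg y, hre]

/-- The Möbius transform of a strict contraction is a strict contraction:
`‖(T − αI)(I − conj(α)T)⁻¹‖ < 1` for `‖T‖ < 1`, `|α| < 1`. -/
theorem mobius_of_strict_contraction
    (n : ℕ) (T : Matrix (Fin n) (Fin n) ℂ) (hT : opNorm T < 1)
    (α : ℂ) (hα : ‖α‖ < 1) :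
    opNorm ((T - α • (1 : Matrix (Fin n) (Fin n) ℂ)) *
      ((1 : Matrix (Fin n) (Fin n) ℂ) - (starRingEnd ℂ) α • T)⁻¹) < 1 := by
  set φ := Matrix.toEuclideanCLM (𝕜 := ℂ) (n := Fin n)
  set a : EuclideanSpace ℂ (Fin n) →L[ℂ] EuclideanSpace ℂ (Fin n) := φ T with ha_def
  have ha : ‖a‖ < 1 := hT
  clear_value a
  have ha0 : (0:ℝ) ≤ ‖a‖ := norm_nonneg a
  have hα0 : (0:ℝ) ≤ ‖α‖ := norm_nonneg α
  set S : Matrix (Fin n) (Fin n) ℂ := 1 - (starRingEnd ℂ) α • T with hS_def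
  set s : EuclideanSpace ℂ (Fin n) →L[ℂ] EuclideanSpace ℂ (Fin n) :=
    1 - conj α • a with hs_def
  have hφS : φ S = s := by
    simp [hS_def, hs_def, map_sub, map_smul, ha_def]
  clear_value s
  -- s is a unit
  have hnorm_small : ‖conj α • a‖ < 1 := by
    have h := norm_smul_le (conj α) a
    rw [RCLike.norm_conj] at h
    have : ‖α‖ * ‖a‖ ≤ ‖a‖ := by nlinarith
    linarith
  have hs_unit : IsUnit s := by
    rw [hs_def]
    simpa using (Units.oneSub (conj α • a) hnorm_small).isUnit
  have hS_unit : IsUnit S := by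
    have := hs_unit.map φ.symm
    rwa [← hφS, StarAlgEquiv.symm_apply_apply] at this
  have hSdet : IsUnit S.det := (Matrix.isUnit_iff_isUnit_det S).mp hS_unit
  have hSr : S * S⁻¹ = 1 := Matrix.mul_nonsing_inv S hSdet
  set r : EuclideanSpace ℂ (Fin n) →L[ℂ] EuclideanSpace ℂ (Fin n) := φ S⁻¹ with hr_def
  have hsr : s * r = 1 := by
    rw [← hφS, hr_def, ← map_mul, hSr, map_one]
  -- the Möbius image
  have himg : φ ((T - α • (1 : Matrix (Fin n) (Fin n) ℂ)) * S⁻¹)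
      = (a - α • 1) * r := by
    simp [map_mul, map_sub, map_smul, hr_def, ← ha_def]
  clear_value r
  -- constants
  set K : ℝ := (1 - ‖α‖ ^ 2) * (1 - ‖a‖ ^ 2) with hK_def
  have hK_pos : 0 < K := by
    apply mul_pos <;> nlinarith
  have hK_le : K ≤ 1 := by
    rw [hK_def]
    have h1 : 1 - ‖α‖ ^ 2 ≤ 1 := by nlinarith
    have h2 : 1 - ‖a‖ ^ 2 ≤ 1 := by nlinarith
    have h3 : 0 ≤ 1 - ‖α‖ ^ 2 := by nlinarith
    have h4 : 0 ≤ 1 - ‖a‖ ^ 2 := by nlinarith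
    nlinarith
  clear_value K
  set c : ℝ := Real.sqrt (1 - K / 4) with hc_def
  have hc_nonneg : (0:ℝ) ≤ c := Real.sqrt_nonneg _
  have hc_lt : c < 1 := by
    rw [hc_def]
    have h1 : 1 - K / 4 < 1 := by linarith
    have h2 : 0 ≤ 1 - K / 4 := by linarith
    calc Real.sqrt (1 - K / 4) < Real.sqrt 1 := Real.sqrt_lt_sqrt h2 h1
      _ = 1 := Real.sqrt_one
  -- norm bound
  have hbound : ‖(a - α • 1) * r‖ ≤ c := by
    apply ContinuousLinearMap.opNorm_le_bound _ hc_nonneg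
    intro x
    set y := r x with hy_def
    have hsy : s y = x := by
      rw [hy_def]
      have := congrFun (congrArg DFunLike.coe hsr) x
      simpa [ContinuousLinearMap.mul_apply] using this
    have happ0 : ((a - α • 1) * r) x = a y - α • y := by
      simp [ContinuousLinearMap.mul_apply, ContinuousLinearMap.sub_apply, hy_def]
    clear_value y
    rw [happ0]
    have hid := key_identity a α y
    have hay : ‖a y‖ ≤ ‖a‖ * ‖y‖ := a.le_opNorm y
    have hx_le : ‖x‖ ≤ 2 * ‖y‖ := by
      rw [← hsy]
      have : s y = y - conj α • a y := by
        simp [hs_def, ContinuousLinearMap.sub_apply]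
      rw [this]
      calc ‖y - conj α • a y‖ ≤ ‖y‖ + ‖conj α • a y‖ := norm_sub_le _ _
        _ = ‖y‖ + ‖α‖ * ‖a y‖ := by rw [norm_smul, RCLike.norm_conj]
        _ ≤ 2 * ‖y‖ := by nlinarith [norm_nonneg (a y), norm_nonneg y]
    have hxsy : ‖x‖ = ‖y - conj α • a y‖ := by
      rw [← hsy]; congr 1
      simp [hs_def, ContinuousLinearMap.sub_apply]
    have hsq : ‖a y - α • y‖ ^ 2 ≤ c ^ 2 * ‖x‖ ^ 2 := by
      have hc2 : c ^ 2 = 1 - K / 4 := Real.sq_sqrt (by nlinarith)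
      rw [hc2]
      have h1 : ‖a y‖ ^ 2 ≤ ‖a‖ ^ 2 * ‖y‖ ^ 2 := by
        nlinarith [norm_nonneg (a y), norm_nonneg y]
      have h2 : (1 - ‖a‖ ^ 2) * ‖y‖ ^ 2 ≤ ‖y‖ ^ 2 - ‖a y‖ ^ 2 := by nlinarith
      have hKy : K * ‖y‖ ^ 2 ≤ (1 - ‖α‖ ^ 2) * (‖y‖ ^ 2 - ‖a y‖ ^ 2) := by
        calc K * ‖y‖ ^ 2 = (1 - ‖α‖ ^ 2) * ((1 - ‖a‖ ^ 2) * ‖y‖ ^ 2) := by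
              rw [hK_def]; ring
          _ ≤ (1 - ‖α‖ ^ 2) * (‖y‖ ^ 2 - ‖a y‖ ^ 2) :=
              mul_le_mul_of_nonneg_left h2 (by nlinarith)
      have hid2 : ‖a y - α • y‖ ^ 2 + (1 - ‖α‖ ^ 2) * (‖y‖ ^ 2 - ‖a y‖ ^ 2) = ‖x‖ ^ 2 := by
        rw [hxsy]; exact hid
      have hx2 : ‖x‖ ^ 2 ≤ 4 * ‖y‖ ^ 2 := by nlinarith [norm_nonneg x, norm_nonneg y]
      have h5 : K * ‖x‖ ^ 2 ≤ K * (4 * ‖y‖ ^ 2) := mul_le_mul_of_nonneg_left hx2 hK_pos.le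
      nlinarith [hid2, hKy, h5]
    calc ‖a y - α • y‖ = Real.sqrt (‖a y - α • y‖ ^ 2) := by
          rw [Real.sqrt_sq (norm_nonneg _)]
      _ ≤ Real.sqrt (c ^ 2 * ‖x‖ ^ 2) := Real.sqrt_le_sqrt hsq
      _ = c * ‖x‖ := by
          rw [show c ^ 2 * ‖x‖ ^ 2 = (c * ‖x‖)^2 by ring,
            Real.sqrt_sq (by positivity)]
  calc opNorm ((T - α • (1 : Matrix (Fin n) (Fin n) ℂ)) * S⁻¹)
      = ‖(a - α • 1) * r‖ := by rw [opNorm, himg]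
    _ ≤ c := hbound
    _ < 1 := hc_lt
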